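/- Let Δ be a nondegenerate tetrahedron in ℝ³ with face areas A_1, A_2, A_3, A_4 and exterior dihedral angles α_{ij} between faces i and j. Then A_4²·(1 − cos²α_{12} − cos²α_{14} − cos²α_{24} − 2cos α_{12} cos α_{24} cos α_{14}) = A_3²·(1 − cos²α_{12} − cos²α_{13} − cos²α_{23} − 2cos α_{12} cos α_{23} cos α_{13}). -/

import Mathlib

open MeasureTheory RealInnerProductSpace Real

noncomputable def faceArea (v : Fin 4 → EuclideanSpace ℝ (Fin 3)) (i : Fin 4) : ℝ :=
  (μH[(2 : ℝ)] (convexHull ℝ (v '' {i}ᶜ))).toReal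

def IsOutwardNormal (v : Fin 4 → EuclideanSpace ℝ (Fin 3)) (i : Fin 4)
    (u : EuclideanSpace ℝ (Fin 3)) : Prop :=
  ‖u‖ = 1 ∧ (∀ j k, j ≠ i → k ≠ i → ⟪u, v j - v k⟫ = 0) ∧
    (∀ j, j ≠ i → ⟪u, v i - v j⟫ < 0)

open Matrix Module Set

noncomputable abbrev E2' := EuclideanSpace ℝ (Fin 2)
noncomputable abbrev E3' := EuclideanSpace ℝ (Fin 3)

noncomputable def stdTri : Set E2' :=
  convexHull ℝ {0, PiLp.basisFun 2 ℝ (Fin 2) 0, PiLp.basisFun 2 ℝ (Fin 2) 1}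

instance : (μH[(2:ℝ)] : Measure E2').IsAddHaarMeasure := by
  have := MeasureTheory.isAddHaarMeasure_hausdorffMeasure (E := E2')
  simpa using this

lemma stdTri_lt_top : μH[(2:ℝ)] stdTri < ⊤ :=
  ((Set.toFinite _).isCompact_convexHull ℝ).measure_lt_top

noncomputable def cp (x y : E3') : E3' :=
  (WithLp.equiv 2 (Fin 3 → ℝ)).symm
    ![x 1 * y 2 - x 2 * y 1, x 2 * y 0 - x 0 * y 2, x 0 * y 1 - x 1 * y 0]

lemma cp_0 (x y : E3') : cp x y 0 = x 1 * y 2 - x 2 * y 1 := rfl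
lemma cp_1 (x y : E3') : cp x y 1 = x 2 * y 0 - x 0 * y 2 := rfl
lemma cp_2 (x y : E3') : cp x y 2 = x 0 * y 1 - x 1 * y 0 := rfl

lemma E3_ext (x y : E3') (h0 : x 0 = y 0) (h1 : x 1 = y 1) (h2 : x 2 = y 2) : x = y := by
  ext i; fin_cases i <;> assumption

lemma inner_E3 (x y : E3') : ⟪x, y⟫ = x 0 * y 0 + x 1 * y 1 + x 2 * y 2 := by
  simp [PiLp.inner_apply, Fin.sum_univ_three]; ring

lemma lagrange (x y : E3') : ⟪cp x y, cp x y⟫ = ⟪x,x⟫*⟪y,y⟫ - ⟪x,y⟫^2 := by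
  simp only [inner_E3, cp_0, cp_1, cp_2]; ring

lemma perp_id (u x y : E3') (hux : ⟪u,x⟫ = 0) (huy : ⟪u,y⟫ = 0) :
    ⟪cp x y, cp x y⟫ • u = ⟪u, cp x y⟫ • cp x y := by
  rw [inner_E3, inner_E3] at *
  apply E3_ext <;>
    simp only [PiLp.smul_apply, smul_eq_mul, cp_0, cp_1, cp_2]
  · linear_combination ((x 2 * y 0 - x 0 * y 2) * x 2 - (x 0 * y 1 - x 1 * y 0) * x 1) * huy -
      ((x 2 * y 0 - x 0 * y 2) * y 2 - (x 0 * y 1 - x 1 * y 0) * y 1) * hux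
  · linear_combination ((x 0 * y 1 - x 1 * y 0) * x 0 - (x 1 * y 2 - x 2 * y 1) * x 2) * huy -
      ((x 0 * y 1 - x 1 * y 0) * y 0 - (x 1 * y 2 - x 2 * y 1) * y 2) * hux
  · linear_combination ((x 1 * y 2 - x 2 * y 1) * x 1 - (x 2 * y 0 - x 0 * y 2) * x 0) * huy -
      ((x 1 * y 2 - x 2 * y 1) * y 1 - (x 2 * y 0 - x 0 * y 2) * y 0) * hux

lemma sum_normals (v : Fin 4 → E3') :
    cp (v 2 - v 1) (v 3 - v 1) + cp (v 3 - v 0) (v 2 - v 0)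
      + cp (v 1 - v 0) (v 3 - v 0) + cp (v 2 - v 0) (v 1 - v 0) = 0 := by
  apply E3_ext <;>
    simp only [PiLp.add_apply, PiLp.sub_apply, PiLp.zero_apply, cp_0, cp_1, cp_2] <;> ring

lemma trip0 (v : Fin 4 → E3') :
    ⟪cp (v 2 - v 1) (v 3 - v 1), v 0 - v 1⟫ = -⟪v 1 - v 0, cp (v 2 - v 0) (v 3 - v 0)⟫ := by
  simp only [inner_E3, PiLp.sub_apply, cp_0, cp_1, cp_2]; ring
lemma trip1 (v : Fin 4 → E3') :
    ⟪cp (v 3 - v 0) (v 2 - v 0), v 1 - v 0⟫ = -⟪v 1 - v 0, cp (v 2 - v 0) (v 3 - v 0)⟫ := by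
  simp only [inner_E3, PiLp.sub_apply, cp_0, cp_1, cp_2]; ring
lemma trip2 (v : Fin 4 → E3') :
    ⟪cp (v 1 - v 0) (v 3 - v 0), v 2 - v 0⟫ = -⟪v 1 - v 0, cp (v 2 - v 0) (v 3 - v 0)⟫ := by
  simp only [inner_E3, PiLp.sub_apply, cp_0, cp_1, cp_2]; ring
lemma trip3 (v : Fin 4 → E3') :
    ⟪cp (v 2 - v 0) (v 1 - v 0), v 3 - v 0⟫ = -⟪v 1 - v 0, cp (v 2 - v 0) (v 3 - v 0)⟫ := by
  simp only [inner_E3, PiLp.sub_apply, cp_0, cp_1, cp_2]; ring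

noncomputable def G (u v w : E3') : ℝ :=
  ⟪u,u⟫*(⟪v,v⟫*⟪w,w⟫-⟪v,w⟫^2) - ⟪u,v⟫*(⟪u,v⟫*⟪w,w⟫-⟪v,w⟫*⟪u,w⟫)
    + ⟪u,w⟫*(⟪u,v⟫*⟪v,w⟫-⟪v,v⟫*⟪u,w⟫)

lemma G_smul (u v w : E3') (c : ℝ) : G u v (c • w) = c^2 * G u v w := by
  simp only [G, real_inner_smul_right, real_inner_smul_left]; ring

lemma G_shift (u v p : E3') (a b : ℝ) : G u v (a•u + b•v + p) = G u v p := by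
  simp only [G, inner_add_right, inner_add_left, real_inner_smul_right, real_inner_smul_left]
  rw [real_inner_comm v u, real_inner_comm p u, real_inner_comm p v]
  ring

lemma indep_of_cp_ne (x y : E3') (h : cp x y ≠ 0) : LinearIndependent ℝ ![x, y] := by
  rw [LinearIndependent.pair_iff]
  intro s t hst
  have h0 : ∀ i, s * x i + t * y i = 0 := by
    intro i
    have := congrArg (fun z : E3' => z i) hst
    simpa [PiLp.add_apply, PiLp.smul_apply] using this
  have hs : s • cp x y = 0 := by
    apply E3_ext <;>
      simp only [PiLp.smul_apply, PiLp.zero_apply, smul_eq_mul, cp_0, cp_1, cp_2]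
    · linear_combination y 2 * h0 1 - y 1 * h0 2
    · linear_combination y 0 * h0 2 - y 2 * h0 0
    · linear_combination y 1 * h0 0 - y 0 * h0 1
  have ht : t • cp x y = 0 := by
    apply E3_ext <;>
      simp only [PiLp.smul_apply, PiLp.zero_apply, smul_eq_mul, cp_0, cp_1, cp_2]
    · linear_combination x 1 * h0 2 - x 2 * h0 1
    · linear_combination x 2 * h0 0 - x 0 * h0 2
    · linear_combination x 0 * h0 1 - x 1 * h0 0
  exact ⟨(smul_eq_zero.1 hs).resolve_right h, (smul_eq_zero.1 ht).resolve_right h⟩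

lemma D_ne_zero (v : Fin 4 → E3') (hv : AffineIndependent ℝ v) :
    ⟪v 1 - v 0, cp (v 2 - v 0) (v 3 - v 0)⟫ ≠ 0 := by
  have hli : LinearIndependent ℝ ![v 1 - v 0, v 2 - v 0, v 3 - v 0] := by
    have h1 := (affineIndependent_iff_linearIndependent_vsub ℝ v 0).1 hv
    have h2 := h1.comp (fun i : Fin 3 => (⟨i.succ, by simp [Fin.succ_ne_zero]⟩ : {x : Fin 4 // x ≠ 0}))
      (fun i j hij => by
        simpa [Fin.succ_inj] using Subtype.mk_eq_mk.1 hij)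
    have h3 : (fun (i : {x : Fin 4 // x ≠ 0}) => v i -ᵥ v 0) ∘
        (fun i : Fin 3 => (⟨i.succ, by simp [Fin.succ_ne_zero]⟩ : {x : Fin 4 // x ≠ 0}))
        = ![v 1 - v 0, v 2 - v 0, v 3 - v 0] := by
      funext i; fin_cases i <;> rfl
    rwa [h3] at h2
  set A : Matrix (Fin 3) (Fin 3) ℝ :=
    ![WithLp.equiv 2 (Fin 3 → ℝ) (v 1 - v 0), WithLp.equiv 2 (Fin 3 → ℝ) (v 2 - v 0),
      WithLp.equiv 2 (Fin 3 → ℝ) (v 3 - v 0)] with hA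
  have hrows : LinearIndependent ℝ (fun i => A i) := by
    have h4 := hli.map' (WithLp.linearEquiv 2 ℝ (Fin 3 → ℝ)).toLinearMap
      (LinearEquiv.ker _)
    have h5 : (WithLp.linearEquiv 2 ℝ (Fin 3 → ℝ)).toLinearMap ∘ ![v 1 - v 0, v 2 - v 0, v 3 - v 0]
        = fun i => A i := by
      funext i; fin_cases i <;> rfl
    rwa [h5] at h4
  have hdet : A.det ≠ 0 := by
    have := Matrix.linearIndependent_rows_iff_isUnit.1 hrows
    exact isUnit_iff_ne_zero.1 ((Matrix.isUnit_iff_isUnit_det _).1 this)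
  intro hD
  apply hdet
  rw [Matrix.det_fin_three]
  have : ∀ (i : Fin 4) (j : Fin 3), WithLp.equiv 2 (Fin 3 → ℝ) (v i - v 0) j = (v i - v 0) j :=
    fun _ _ => rfl
  rw [inner_E3] at hD
  simp only [hA, Matrix.cons_val', Matrix.cons_val_zero, Matrix.cons_val_one, Matrix.head_cons,
    Matrix.cons_val_two, Matrix.tail_cons, Matrix.head_fin_const, Matrix.empty_val',
    Matrix.cons_val_fin_one]
  simp only [this]
  simp only [cp_0, cp_1, cp_2, PiLp.sub_apply] at hD ⊢
  linear_combination hD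

lemma face_sign (u n w : E3') (Dv : ℝ) (hu : ‖u‖ = 1) (hn : n ≠ 0)
    (hperp : ⟪n,n⟫ • u = ⟪u,n⟫ • n) (hout : ⟪u, w⟫ < 0) (hnw : ⟪n, w⟫ = -Dv) :
    ∃ s : ℝ, u = s • n ∧ (Real.sqrt ⟪n,n⟫ * s)^2 = 1 ∧ (Real.sqrt ⟪n,n⟫ * s) * Dv > 0 := by
  have hnn : ⟪n,n⟫ ≠ 0 := inner_self_ne_zero.2 hn
  have hnnpos : (0:ℝ) < ⟪n,n⟫ := lt_of_le_of_ne real_inner_self_nonneg (Ne.symm hnn)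
  have hsqrt : Real.sqrt ⟪n,n⟫ ^ 2 = ⟪n,n⟫ := Real.sq_sqrt real_inner_self_nonneg
  have hsqrtpos : 0 < Real.sqrt ⟪n,n⟫ := Real.sqrt_pos.2 hnnpos
  set s : ℝ := ⟪u,n⟫ / ⟪n,n⟫ with hs
  have hueq : u = s • n := by
    have h1 := congrArg (fun z => (⟪n,n⟫)⁻¹ • z) hperp
    simp only [smul_smul, inv_mul_cancel₀ hnn, one_smul] at h1
    rw [h1, hs, div_eq_inv_mul]
  have huu : ⟪u,u⟫ = 1 := by
    rw [real_inner_self_eq_norm_sq, hu]; norm_num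
  have hs2 : s^2 * ⟪n,n⟫ = 1 := by
    rw [hueq] at huu
    rw [real_inner_smul_left, real_inner_smul_right] at huu
    rw [← huu]; ring
  have hsign : s * Dv > 0 := by
    rw [hueq, real_inner_smul_left, hnw] at hout
    nlinarith
  refine ⟨s, hueq, by rw [mul_pow, hsqrt]; linear_combination hs2, ?_⟩
  have : (Real.sqrt ⟪n,n⟫ * s) * Dv = Real.sqrt ⟪n,n⟫ * (s * Dv) := by ring
  rw [this]
  exact mul_pos hsqrtpos hsign

lemma sign_eq {σ τ Dv : ℝ} (h1 : σ^2 = 1) (h2 : τ^2 = 1) (hσ : σ*Dv > 0) (hτ : τ*Dv > 0) :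
    σ = τ := by
  have e1 : (σ-1)*(σ+1) = 0 := by linear_combination h1
  have e2 : (τ-1)*(τ+1) = 0 := by linear_combination h2
  have hσ' : σ = 1 ∨ σ = -1 := by
    rcases mul_eq_zero.1 e1 with h|h
    · left; linarith
    · right; linarith
  have hτ' : τ = 1 ∨ τ = -1 := by
    rcases mul_eq_zero.1 e2 with h|h
    · left; linarith
    · right; linarith
  rcases hσ' with rfl|rfl <;> rcases hτ' with rfl|rfl <;> [rfl; skip; skip; rfl] <;>
    (exfalso; nlinarith)

lemma area_tri (a x y : E3') (h : LinearIndependent ℝ ![x, y]) :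
    μH[(2:ℝ)] (convexHull ℝ {a, a + x, a + y}) =
      ENNReal.ofReal (Real.sqrt (⟪x,x⟫ * ⟪y,y⟫ - ⟪x,y⟫^2)) * μH[(2:ℝ)] stdTri := by
  have htrans : convexHull ℝ {a, a + x, a + y}
      = (fun p : E3' => a + p) '' convexHull ℝ {0, x, y} := by
    have h1 := (AffineEquiv.constVAdd ℝ E3' a).toAffineMap.image_convexHull ({0, x, y} : Set E3')
    have h2 : ⇑(AffineEquiv.constVAdd ℝ E3' a).toAffineMap = fun p : E3' => a + p := by
      funext p; simp [AffineEquiv.constVAdd]; rfl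
    rw [h2] at h1
    rw [h1]; congr 1
    simp [Set.image_insert_eq]
  have hiso : Isometry (fun p : E3' => a + p) :=
    Isometry.of_dist_eq (fun p q => by simp)
  rw [htrans, hiso.hausdorffMeasure_image (Or.inl (by norm_num))]
  set P := Submodule.span ℝ ({x, y} : Set E3') with hPdef
  have hxP : x ∈ P := Submodule.subset_span (by simp)
  have hyP : y ∈ P := Submodule.subset_span (by simp)
  have hP2 : finrank ℝ P = 2 := by
    have h1 := finrank_span_eq_card h
    have h2 : Set.range ![x, y] = {x, y} := by
      simp [Matrix.range_cons, Matrix.range_empty, Set.pair_comm]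
    rw [h2] at h1; simpa using h1
  let b : OrthonormalBasis (Fin 2) ℝ P :=
    (stdOrthonormalBasis ℝ P).reindex (finCongr hP2)
  let x' : E2' := b.repr ⟨x, hxP⟩
  let y' : E2' := b.repr ⟨y, hyP⟩
  let ι : E2' →ₗᵢ[ℝ] E3' := P.subtypeₗᵢ.comp b.repr.symm.toLinearIsometry
  have hιx : ι x' = x := by simp [ι, x']
  have hιy : ι y' = y := by simp [ι, y']
  have hinner : ∀ (u v : P), ⟪b.repr u, b.repr v⟫ = ⟪(u:E3'),(v:E3')⟫ := fun u v => by
    rw [b.repr.inner_map_map]; rfl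
  let M : E2' →ₗ[ℝ] E2' := (PiLp.basisFun 2 ℝ (Fin 2)).constr ℝ ![x', y']
  have hM0 : M (EuclideanSpace.single 0 (1:ℝ)) = x' := by
    simp [M]
  have hM1 : M (EuclideanSpace.single 1 (1:ℝ)) = y' := by
    simp [M]
  have him : convexHull ℝ ({0, x, y} : Set E3') = ι '' (M '' stdTri) := by
    rw [show (M '' stdTri) = convexHull ℝ {0, x', y'} by
      rw [stdTri, M.image_convexHull]; congr 1
      simp [Set.image_insert_eq, hM0, hM1]]
    have h3 := ι.toLinearMap.image_convexHull ({0, x', y'} : Set E2')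
    rw [LinearIsometry.coe_toLinearMap] at h3
    rw [h3]
    congr 1
    simp [Set.image_insert_eq, hιx, hιy]
  have hdet : LinearMap.det M = x' 0 * y' 1 - y' 0 * x' 1 := by
    rw [← LinearMap.det_toMatrix (PiLp.basisFun 2 ℝ (Fin 2)), Matrix.det_fin_two]
    simp [LinearMap.toMatrix_apply, M, Basis.constr_basis]
  have hgram : ⟪x,x⟫ * ⟪y,y⟫ - ⟪x,y⟫^2 = (LinearMap.det M)^2 := by
    rw [hdet, ← hinner ⟨x,hxP⟩ ⟨x,hxP⟩, ← hinner ⟨x,hxP⟩ ⟨y,hyP⟩, ← hinner ⟨y,hyP⟩ ⟨y,hyP⟩]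
    show ⟪x',x'⟫ * ⟪y',y'⟫ - ⟪x',y'⟫^2 = _
    simp [PiLp.inner_apply, Fin.sum_univ_two]
    simp only [EuclideanSpace.norm_sq_eq, Fin.sum_univ_two, Real.norm_eq_abs, sq_abs]
    ring
  rw [him, ι.isometry.hausdorffMeasure_image (Or.inl (by norm_num)),
    Measure.addHaar_image_linearMap, hgram, Real.sqrt_sq_eq_abs]

lemma faceArea_eq (v : Fin 4 → E3') (i : Fin 4) (a x y : E3')
    (hset : v '' ({i}ᶜ) = {a, a + x, a + y}) (h : cp x y ≠ 0) :
    faceArea v i = (μH[(2:ℝ)] stdTri).toReal * Real.sqrt ⟪cp x y, cp x y⟫ := by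
  rw [faceArea, hset, area_tri a x y (indep_of_cp_ne x y h), ← lagrange,
    ENNReal.toReal_mul, ENNReal.toReal_ofReal (Real.sqrt_nonneg _), mul_comm]

lemma face_package (v : Fin 4 → E3') (Dv : ℝ) (i j k l : Fin 4) (u : E3')
    (hfi : IsOutwardNormal v i u)
    (hj : j ≠ i) (hk : k ≠ i) (hl : l ≠ i)
    (hset : v '' ({i}ᶜ) = {v j, v j + (v k - v j), v j + (v l - v j)})
    (htrip : ⟪cp (v k - v j) (v l - v j), v i - v j⟫ = -Dv)
    (hD : Dv ≠ 0) :
    ∃ s : ℝ, u = s • cp (v k - v j) (v l - v j) ∧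
      (Real.sqrt ⟪cp (v k - v j) (v l - v j), cp (v k - v j) (v l - v j)⟫ * s)^2 = 1 ∧
      (Real.sqrt ⟪cp (v k - v j) (v l - v j), cp (v k - v j) (v l - v j)⟫ * s) * Dv > 0 ∧
      faceArea v i = (μH[(2:ℝ)] stdTri).toReal *
        Real.sqrt ⟪cp (v k - v j) (v l - v j), cp (v k - v j) (v l - v j)⟫ := by
  obtain ⟨hu, horth, hout⟩ := hfi
  have hne : cp (v k - v j) (v l - v j) ≠ 0 := by
    intro hz
    rw [hz, inner_zero_left] at htrip
    exact hD (by linarith)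
  have hperp := perp_id u (v k - v j) (v l - v j) (horth k j hk hj) (horth l j hl hj)
  obtain ⟨s, h1, h2, h3⟩ := face_sign u (cp (v k - v j) (v l - v j)) (v i - v j) Dv hu hne
    hperp (hout j hj) htrip
  exact ⟨s, h1, h2, h3, faceArea_eq v i (v j) (v k - v j) (v l - v j) hset hne⟩

/-- The law of sines for a nondegenerate tetrahedron in `ℝ³`, expressed via its face
areas `A_i` and its dihedral angles `α_{ij}` (with `⟨𝐟_i,𝐟_j⟩ = -cos α_{ij}` for the
outward unit normals). Faces `1,2,3,4` are indexed by `0,1,2,3 : Fin 4`. -/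
theorem tetrahedron_law_of_sines (v : Fin 4 → EuclideanSpace ℝ (Fin 3))
    (hv : AffineIndependent ℝ v)
    (f : Fin 4 → EuclideanSpace ℝ (Fin 3)) (hf : ∀ i, IsOutwardNormal v i (f i))
    (α : Fin 4 → Fin 4 → ℝ) (hα : ∀ i j, i ≠ j → ⟪f i, f j⟫ = -Real.cos (α i j)) :
    faceArea v 3 ^ 2 *
        (1 - Real.cos (α 0 1) ^ 2 - Real.cos (α 0 3) ^ 2 - Real.cos (α 1 3) ^ 2 -
          2 * Real.cos (α 0 1) * Real.cos (α 1 3) * Real.cos (α 0 3)) =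
      faceArea v 2 ^ 2 *
        (1 - Real.cos (α 0 1) ^ 2 - Real.cos (α 0 2) ^ 2 - Real.cos (α 1 2) ^ 2 -
          2 * Real.cos (α 0 1) * Real.cos (α 1 2) * Real.cos (α 0 2)) := by
  have hD : ⟪v 1 - v 0, cp (v 2 - v 0) (v 3 - v 0)⟫ ≠ 0 := D_ne_zero v hv
  set Dv : ℝ := ⟪v 1 - v 0, cp (v 2 - v 0) (v 3 - v 0)⟫ with hDv
  -- face set computations
  have hset0 : v '' ({(0:Fin 4)}ᶜ) = {v 1, v 1 + (v 2 - v 1), v 1 + (v 3 - v 1)} := by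
    rw [show v 1 + (v 2 - v 1) = v 2 by abel, show v 1 + (v 3 - v 1) = v 3 by abel,
      show ({(0:Fin 4)}ᶜ : Set (Fin 4)) = {1, 2, 3} from by ext p; fin_cases p <;> simp,
      Set.image_insert_eq, Set.image_insert_eq, Set.image_singleton]
  have hset1 : v '' ({(1:Fin 4)}ᶜ) = {v 0, v 0 + (v 3 - v 0), v 0 + (v 2 - v 0)} := by
    rw [show v 0 + (v 3 - v 0) = v 3 by abel, show v 0 + (v 2 - v 0) = v 2 by abel,
      show ({(1:Fin 4)}ᶜ : Set (Fin 4)) = {0, 2, 3} from by ext p; fin_cases p <;> simp,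
      Set.image_insert_eq, Set.image_insert_eq, Set.image_singleton]
    exact congrArg (insert (v 0)) (Set.pair_comm (v 2) (v 3))
  have hset2 : v '' ({(2:Fin 4)}ᶜ) = {v 0, v 0 + (v 1 - v 0), v 0 + (v 3 - v 0)} := by
    rw [show v 0 + (v 1 - v 0) = v 1 by abel, show v 0 + (v 3 - v 0) = v 3 by abel,
      show ({(2:Fin 4)}ᶜ : Set (Fin 4)) = {0, 1, 3} from by ext p; fin_cases p <;> simp,
      Set.image_insert_eq, Set.image_insert_eq, Set.image_singleton]
  have hset3 : v '' ({(3:Fin 4)}ᶜ) = {v 0, v 0 + (v 2 - v 0), v 0 + (v 1 - v 0)} := by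
    rw [show v 0 + (v 2 - v 0) = v 2 by abel, show v 0 + (v 1 - v 0) = v 1 by abel,
      show ({(3:Fin 4)}ᶜ : Set (Fin 4)) = {0, 1, 2} from by ext p; fin_cases p <;> simp,
      Set.image_insert_eq, Set.image_insert_eq, Set.image_singleton]
    exact congrArg (insert (v 0)) (Set.pair_comm (v 1) (v 2))
  obtain ⟨s0, hf0, hσ0, hD0, hA0⟩ := face_package v Dv 0 1 2 3 (f 0) (hf 0)
    (by decide) (by decide) (by decide) hset0 (trip0 v) hD
  obtain ⟨s1, hf1, hσ1, hD1, hA1⟩ := face_package v Dv 1 0 3 2 (f 1) (hf 1)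
    (by decide) (by decide) (by decide) hset1 (trip1 v) hD
  obtain ⟨s2, hf2, hσ2, hD2, hA2⟩ := face_package v Dv 2 0 1 3 (f 2) (hf 2)
    (by decide) (by decide) (by decide) hset2 (trip2 v) hD
  obtain ⟨s3, hf3, hσ3, hD3, hA3⟩ := face_package v Dv 3 0 2 1 (f 3) (hf 3)
    (by decide) (by decide) (by decide) hset3 (trip3 v) hD
  set c : ℝ := (μH[(2:ℝ)] stdTri).toReal with hc
  set n0 : E3' := cp (v 2 - v 1) (v 3 - v 1) with hn0
  set n1 : E3' := cp (v 3 - v 0) (v 2 - v 0) with hn1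
  set n2 : E3' := cp (v 1 - v 0) (v 3 - v 0) with hn2
  set n3 : E3' := cp (v 2 - v 0) (v 1 - v 0) with hn3
  set σ0 : ℝ := Real.sqrt ⟪n0, n0⟫ * s0 with hσ0d
  set σ1 : ℝ := Real.sqrt ⟪n1, n1⟫ * s1 with hσ1d
  set σ2 : ℝ := Real.sqrt ⟪n2, n2⟫ * s2 with hσ2d
  set σ3 : ℝ := Real.sqrt ⟪n3, n3⟫ * s3 with hσ3d
  have he1 : σ1 = σ0 := sign_eq hσ1 hσ0 hD1 hD0
  have he2 : σ2 = σ0 := sign_eq hσ2 hσ0 hD2 hD0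
  have he3 : σ3 = σ0 := sign_eq hσ3 hσ0 hD3 hD0
  -- Minkowski relation
  have hkey : ∀ (nn : E3') (ss : ℝ) (i : Fin 4), faceArea v i = c * Real.sqrt ⟪nn, nn⟫ →
      f i = ss • nn → faceArea v i • f i = (c * (Real.sqrt ⟪nn, nn⟫ * ss)) • nn := by
    intro nn ss i hA hffe
    rw [hA, hffe, smul_smul]
    ring_nf
  have hk0 := hkey n0 s0 0 hA0 hf0
  have hk1 := hkey n1 s1 1 hA1 hf1
  have hk2 := hkey n2 s2 2 hA2 hf2
  have hk3 := hkey n3 s3 3 hA3 hf3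
  rw [← hσ0d] at hk0
  rw [← hσ1d, he1] at hk1
  rw [← hσ2d, he2] at hk2
  rw [← hσ3d, he3] at hk3
  have hmink : faceArea v 0 • f 0 + faceArea v 1 • f 1 + faceArea v 2 • f 2
      + faceArea v 3 • f 3 = 0 := by
    rw [hk0, hk1, hk2, hk3, ← smul_add, ← smul_add, ← smul_add]
    rw [hn0, hn1, hn2, hn3, sum_normals, smul_zero]
  -- Gram determinant argument
  set A0 : ℝ := faceArea v 0
  set A1 : ℝ := faceArea v 1
  set A2 : ℝ := faceArea v 2
  set A3 : ℝ := faceArea v 3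
  have h3' : A3 • f 3 = (-A0) • f 0 + (-A1) • f 1 + ((-A2) • f 2) := by
    rw [← sub_eq_zero, show A3 • f 3 - ((-A0) • f 0 + (-A1) • f 1 + ((-A2) • f 2))
      = A0 • f 0 + A1 • f 1 + A2 • f 2 + A3 • f 3 from by module]
    exact hmink
  have hGram : A3^2 * G (f 0) (f 1) (f 3) = A2^2 * G (f 0) (f 1) (f 2) := by
    calc A3^2 * G (f 0) (f 1) (f 3) = G (f 0) (f 1) (A3 • f 3) := (G_smul _ _ _ _).symm
    _ = G (f 0) (f 1) ((-A0) • f 0 + (-A1) • f 1 + ((-A2) • f 2)) := by rw [h3']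
    _ = G (f 0) (f 1) ((-A2) • f 2) := G_shift _ _ _ _ _
    _ = A2^2 * G (f 0) (f 1) (f 2) := by rw [G_smul]; ring
  have hone : ∀ i, ⟪f i, f i⟫ = 1 := fun i => by
    rw [real_inner_self_eq_norm_sq, (hf i).1]; norm_num
  have hcos : ∀ i j, i ≠ j → Real.cos (α i j) = -⟪f i, f j⟫ := fun i j hij => by
    rw [hα i j hij]; ring
  rw [show (1 - Real.cos (α 0 1) ^ 2 - Real.cos (α 0 3) ^ 2 - Real.cos (α 1 3) ^ 2 -
        2 * Real.cos (α 0 1) * Real.cos (α 1 3) * Real.cos (α 0 3)) = G (f 0) (f 1) (f 3) from by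
      rw [hcos 0 1 (by decide), hcos 0 3 (by decide), hcos 1 3 (by decide)]
      simp only [G, hone]; ring,
    show (1 - Real.cos (α 0 1) ^ 2 - Real.cos (α 0 2) ^ 2 - Real.cos (α 1 2) ^ 2 -
        2 * Real.cos (α 0 1) * Real.cos (α 1 2) * Real.cos (α 0 2)) = G (f 0) (f 1) (f 2) from by
      rw [hcos 0 1 (by decide), hcos 0 2 (by decide), hcos 1 2 (by decide)]
      simp only [G, hone]; ring]
  exact hGram
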